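/- (Evaluation of the invariant I₁ in the fourth case of intermediate degeneration, formulas (10.19)–(10.24)) Let σ : ℝ → ℝ be smooth with σ(y) ≠ 0 for all y, and let U = {(x,y) ∈ ℝ² : x > 0}. Define on U the canonical coefficients P = 0, Q = −5/(12·x), R = 0, S = σ(y)·x^{5/4} + (4/3)·x². Set N = Q, Θ = S_{1.0} − (6/5)·R_{0.1} + (12/5)·S·Q − (54/25)·R², and Γ¹₂₂ = (9/25)·Θ_{0.1}·Q·R·Θ + (12/5)·Q·Θ_{0.1}² − 3·Θ_{0.1}·R − (54/125)·R²·Θ²·Q − (54/25)·R²·Θ − (9/5)·Q·Θ·Θ_{0.2} − (54/25)·Q·Θ²·R_{0.1} − Θ_{0.2} − (6/5)·R_{0.1}·Θ + (81/25)·S·Q²·Θ² + (18/5)·S·Q·Θ + S. Define E = Γ¹₂₂ + (27·N/5)·(Θ + 5/(9·N))³ − (3/4)·(Θ + 5/(9·N))² and I₁ = E⁶/(N⁸·(Θ + 5/(9·N))²⁰). Then on U: I₁ = (6879707136/390625)·(3·σ''(y)·σ(y) − 4·σ'(y)²)⁶/σ(y)²⁰. -/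

import Mathlib

noncomputable section

open Real

/-- Partial derivative in the first argument (`f_{1.0}`). -/
def pdx (f : ℝ → ℝ → ℝ) : ℝ → ℝ → ℝ := fun x y => deriv (fun t => f t y) x

/-- Partial derivative in the second argument (`f_{0.1}`). -/
def pdy (f : ℝ → ℝ → ℝ) : ℝ → ℝ → ℝ := fun x y => deriv (fun t => f x t) y

/-- Indexed partial derivative: `0 ↦ ∂/∂x`, `1 ↦ ∂/∂y`. -/
def pd (i : Fin 2) (f : ℝ → ℝ → ℝ) : ℝ → ℝ → ℝ := if i = 0 then pdx f else pdy f

/-- Smoothness of a two-variable real function on a set `U ⊆ ℝ²`. -/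
def Smooth2 (U : Set (ℝ × ℝ)) (f : ℝ → ℝ → ℝ) : Prop :=
  ContDiffOn ℝ (⊤ : ℕ∞) (Function.uncurry f) U

/-- The quantity `A` of formula (1.6). -/
def coefA (P Q R S : ℝ → ℝ → ℝ) : ℝ → ℝ → ℝ := fun x y =>
  pdy (pdy P) x y - 2 * pdx (pdy Q) x y + pdx (pdx R) x y
    + 2 * P x y * pdx S x y + S x y * pdx P x y
    - 3 * P x y * pdy R x y - 3 * R x y * pdy P x y
    - 3 * Q x y * pdx R x y + 6 * Q x y * pdy Q x y

/-- The quantity `B` of formula (1.6). -/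
def coefB (P Q R S : ℝ → ℝ → ℝ) : ℝ → ℝ → ℝ := fun x y =>
  pdx (pdx S) x y - 2 * pdx (pdy R) x y + pdy (pdy Q) x y
    - 2 * S x y * pdy P x y - P x y * pdy S x y
    + 3 * S x y * pdx Q x y + 3 * Q x y * pdx S x y
    + 3 * R x y * pdy Q x y - 6 * R x y * pdx R x y

lemma aux_final (A s t u : ℝ) (hA : A ≠ 0) (hs : s ≠ 0) :
    ((3 * u * s - 4 * t ^ 2) / (64 * A ^ 2)) ^ 6
      / ((-5 / (12 * A ^ 4)) ^ 8 * ((1:ℝ)/4 * s * A) ^ 20)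
      = (6879707136/390625) * (3 * u * s - 4 * t ^ 2) ^ 6 / s ^ 20 := by
  field_simp
  ring

set_option maxHeartbeats 2000000 in
/-- Evaluation of the invariant `I₁` in the fourth case of intermediate
degeneration (formulas (10.19)–(10.24)). -/
theorem fourth_case_invariant_I1
    (σ : ℝ → ℝ) (hσ : ContDiff ℝ (⊤ : ℕ∞) σ) (hσne : ∀ y : ℝ, σ y ≠ 0) :
    let U : Set (ℝ × ℝ) := {p | 0 < p.1}
    let P : ℝ → ℝ → ℝ := fun _ _ => 0
    let Q : ℝ → ℝ → ℝ := fun x _ => -5 / (12 * x)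
    let R : ℝ → ℝ → ℝ := fun _ _ => 0
    let S : ℝ → ℝ → ℝ := fun x y => σ y * x ^ ((5:ℝ)/4) + (4/3) * x^2
    let N : ℝ → ℝ → ℝ := Q
    let Θ : ℝ → ℝ → ℝ := fun x y =>
      pdx S x y - (6/5) * pdy R x y + (12/5) * S x y * Q x y - (54/25) * (R x y)^2
    let Γ : ℝ → ℝ → ℝ := fun x y =>
      (9/25) * pdy Θ x y * Q x y * R x y * Θ x y
        + (12/5) * Q x y * (pdy Θ x y)^2
        - 3 * pdy Θ x y * R x y
        - (54/125) * (R x y)^2 * (Θ x y)^2 * Q x y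
        - (54/25) * (R x y)^2 * Θ x y
        - (9/5) * Q x y * Θ x y * pdy (pdy Θ) x y
        - (54/25) * Q x y * (Θ x y)^2 * pdy R x y
        - pdy (pdy Θ) x y
        - (6/5) * pdy R x y * Θ x y
        + (81/25) * S x y * (Q x y)^2 * (Θ x y)^2
        + (18/5) * S x y * Q x y * Θ x y
        + S x y
    let E : ℝ → ℝ → ℝ := fun x y =>
      Γ x y + (27 * N x y / 5) * (Θ x y + 5 / (9 * N x y))^3
        - (3/4) * (Θ x y + 5 / (9 * N x y))^2
    let I1 : ℝ → ℝ → ℝ := fun x y =>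
      (E x y)^6 / ((N x y)^8 * (Θ x y + 5 / (9 * N x y))^20)
    ∀ x y : ℝ, (x, y) ∈ U →
      I1 x y = (6879707136/390625) *
        (3 * deriv (deriv σ) y * σ y - 4 * (deriv σ y)^2)^6 / (σ y)^20 := by
  intro U P Q R S N Θ Γ E I1 x y hU
  have hx : 0 < x := hU
  set A : ℝ := x ^ ((1:ℝ)/4) with hAdef
  have hA : 0 < A := Real.rpow_pos_of_pos hx _
  have hAne : A ≠ 0 := hA.ne'
  have hx4 : x = A ^ 4 := by
    rw [hAdef, ← Real.rpow_natCast (x ^ ((1:ℝ)/4)) 4, ← Real.rpow_mul hx.le]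
    norm_num
  have hx54 : x ^ ((5:ℝ)/4) = A ^ 5 := by
    rw [hAdef, ← Real.rpow_natCast (x ^ ((1:ℝ)/4)) 5, ← Real.rpow_mul hx.le]
    norm_num
  have hσd : Differentiable ℝ σ := hσ.differentiable (by simp)
  have hσ'd : Differentiable ℝ (deriv σ) :=
    ((contDiff_infty_iff_deriv.mp hσ).2).differentiable (by simp)
  have hpdyR : ∀ t : ℝ, pdy R x t = 0 := by
    intro t; simp [pdy, R]
  have hpdxS : ∀ t : ℝ, pdx S x t = (5/4) * σ t * A + (8/3) * A ^ 4 := by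
    intro t
    have h1 : HasDerivAt (fun s : ℝ => s ^ ((5:ℝ)/4)) (((5:ℝ)/4) * x ^ ((5:ℝ)/4 - 1)) x :=
      Real.hasDerivAt_rpow_const (Or.inl hx.ne')
    have h2 : HasDerivAt (fun s : ℝ => σ t * s ^ ((5:ℝ)/4) + (4/3) * s ^ 2)
        (σ t * (((5:ℝ)/4) * x ^ ((5:ℝ)/4 - 1)) + (4/3) * (2 * x)) x := by
      have := (h1.const_mul (σ t)).add ((hasDerivAt_pow 2 x).const_mul ((4:ℝ)/3))
      exact this.congr_deriv (by norm_num)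
    have h3 : pdx S x t = σ t * (((5:ℝ)/4) * x ^ ((5:ℝ)/4 - 1)) + (4/3) * (2 * x) := h2.deriv
    rw [h3, show (5:ℝ)/4 - 1 = 1/4 by norm_num, ← hAdef, hx4]
    ring
  have hΘ : ∀ t : ℝ, Θ x t = (1/4) * σ t * A + (4/3) * A ^ 4 := by
    intro t
    show pdx S x t - (6/5) * pdy R x t + (12/5) * S x t * Q x t - (54/25) * (R x t)^2
      = (1/4) * σ t * A + (4/3) * A ^ 4
    rw [hpdxS t, hpdyR t]
    show _ - _ + (12/5) * (σ t * x ^ ((5:ℝ)/4) + (4/3) * x^2) * (-5 / (12 * x)) - (54/25) * (0:ℝ)^2 = _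
    rw [hx54, hx4]
    have h4 : (A:ℝ) ^ 4 ≠ 0 := pow_ne_zero _ hAne
    field_simp
    ring
  have hpdyΘ : ∀ t : ℝ, pdy Θ x t = (1/4) * deriv σ t * A := by
    intro t
    have hfe : (fun s => Θ x s) = fun s => (1/4) * σ s * A + (4/3) * A ^ 4 := funext hΘ
    have h := ((((hσd t).hasDerivAt.const_mul ((1:ℝ)/4)).mul_const A).add_const ((4/3) * A ^ 4))
    show deriv (fun s => Θ x s) t = _
    rw [hfe]
    exact h.deriv
  have hpdyyΘ : pdy (pdy Θ) x y = (1/4) * deriv (deriv σ) y * A := by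
    have hfe : (fun s => pdy Θ x s) = fun s => (1/4) * deriv σ s * A := funext hpdyΘ
    have h := (((hσ'd y).hasDerivAt.const_mul ((1:ℝ)/4)).mul_const A)
    show deriv (fun s => pdy Θ x s) y = _
    rw [hfe]
    exact h.deriv
  have hN : N x y = -5 / (12 * A ^ 4) := by
    show -5 / (12 * x) = _
    rw [hx4]
  have hT : Θ x y + 5 / (9 * N x y) = (1/4) * σ y * A := by
    rw [hΘ y, hN]
    have h4 : (A:ℝ) ^ 4 ≠ 0 := pow_ne_zero _ hAne
    field_simp
    ring
  have hSv : S x y = σ y * A ^ 5 + (4/3) * A ^ 8 := by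
    show σ y * x ^ ((5:ℝ)/4) + (4/3) * x^2 = _
    rw [hx54, hx4]; ring
  have hQv : Q x y = -5 / (12 * A ^ 4) := hN
  have hE : E x y = (3 * deriv (deriv σ) y * σ y - 4 * (deriv σ y)^2) / (64 * A ^ 2) := by
    show Γ x y + (27 * N x y / 5) * (Θ x y + 5 / (9 * N x y))^3
        - (3/4) * (Θ x y + 5 / (9 * N x y))^2 = _
    rw [hT, hN]
    have hΓ : Γ x y =
        (9/25) * pdy Θ x y * Q x y * R x y * Θ x y
        + (12/5) * Q x y * (pdy Θ x y)^2
        - 3 * pdy Θ x y * R x y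
        - (54/125) * (R x y)^2 * (Θ x y)^2 * Q x y
        - (54/25) * (R x y)^2 * Θ x y
        - (9/5) * Q x y * Θ x y * pdy (pdy Θ) x y
        - (54/25) * Q x y * (Θ x y)^2 * pdy R x y
        - pdy (pdy Θ) x y
        - (6/5) * pdy R x y * Θ x y
        + (81/25) * S x y * (Q x y)^2 * (Θ x y)^2
        + (18/5) * S x y * Q x y * Θ x y
        + S x y := rfl
    have hRv : R x y = 0 := rfl
    rw [hΓ, hRv, hpdyR y, hpdyΘ y, hpdyyΘ, hΘ y, hSv, hQv]
    have h4 : (A:ℝ) ^ 4 ≠ 0 := pow_ne_zero _ hAne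
    field_simp
    ring
  show (E x y)^6 / ((N x y)^8 * (Θ x y + 5 / (9 * N x y))^20) = _
  rw [hE, hT, hN]
  exact aux_final A (σ y) (deriv σ y) (deriv (deriv σ) y) hAne (hσne y)
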